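/- Let σ₁ < σ₂ be real numbers, let q : ℝ → ℝ, and let ψ : ℝ → ℝ be three times differentiable on (σ₁,σ₂) with ψ'(t) > 0 for all t ∈ (σ₁,σ₂). If both u(t) = cos(ψ(t))/√(ψ'(t)) and v(t) = sin(ψ(t))/√(ψ'(t)) satisfy y''(t) + q(t)·y(t) = 0 on (σ₁,σ₂), then ψ' satisfies Kummer's equation relative to q on (σ₁,σ₂), i.e. q(t) − (ψ'(t))² − (1/2)·ψ'''(t)/ψ'(t) + (3/4)·(ψ''(t)/ψ'(t))² = 0 for all t ∈ (σ₁,σ₂). -/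

import Mathlib

open Real Set

lemma deriv_cos_div_sqrt (ψ : ℝ → ℝ) (s : ℝ) (h1 : DifferentiableAt ℝ ψ s)
    (h2 : DifferentiableAt ℝ (deriv ψ) s) (hp : 0 < deriv ψ s) :
    deriv (fun r => Real.cos (ψ r) / Real.sqrt (deriv ψ r)) s
      = -Real.sin (ψ s) * Real.sqrt (deriv ψ s)
        - Real.cos (ψ s) * deriv (deriv ψ) s / (2 * deriv ψ s * Real.sqrt (deriv ψ s)) := by
  have hS : 0 < Real.sqrt (deriv ψ s) := Real.sqrt_pos.2 hp
  have hψ : HasDerivAt ψ (deriv ψ s) s := h1.hasDerivAt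
  have hpd : HasDerivAt (deriv ψ) (deriv (deriv ψ) s) s := h2.hasDerivAt
  have hSd : HasDerivAt (fun r => Real.sqrt (deriv ψ r))
      (deriv (deriv ψ) s / (2 * Real.sqrt (deriv ψ s))) s := hpd.sqrt (ne_of_gt hp)
  rw [(show HasDerivAt (fun r => Real.cos (ψ r) / Real.sqrt (deriv ψ r)) _ s from hψ.cos.div hSd (ne_of_gt hS)).deriv]
  field_simp
  have hX := Real.sq_sqrt hp.le
  linear_combination (Real.cos (ψ s) * deriv (deriv ψ) s + 2 * deriv ψ s * Real.sin (ψ s) * Real.sqrt (deriv ψ s) ^ 2) * hX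

lemma deriv_sin_div_sqrt (ψ : ℝ → ℝ) (s : ℝ) (h1 : DifferentiableAt ℝ ψ s)
    (h2 : DifferentiableAt ℝ (deriv ψ) s) (hp : 0 < deriv ψ s) :
    deriv (fun r => Real.sin (ψ r) / Real.sqrt (deriv ψ r)) s
      = Real.cos (ψ s) * Real.sqrt (deriv ψ s)
        - Real.sin (ψ s) * deriv (deriv ψ) s / (2 * deriv ψ s * Real.sqrt (deriv ψ s)) := by
  have hS : 0 < Real.sqrt (deriv ψ s) := Real.sqrt_pos.2 hp
  have hψ : HasDerivAt ψ (deriv ψ s) s := h1.hasDerivAt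
  have hpd : HasDerivAt (deriv ψ) (deriv (deriv ψ) s) s := h2.hasDerivAt
  have hSd : HasDerivAt (fun r => Real.sqrt (deriv ψ r))
      (deriv (deriv ψ) s / (2 * Real.sqrt (deriv ψ s))) s := hpd.sqrt (ne_of_gt hp)
  rw [(show HasDerivAt (fun r => Real.sin (ψ r) / Real.sqrt (deriv ψ r)) _ s from hψ.sin.div hSd (ne_of_gt hS)).deriv]
  field_simp
  have hX := Real.sq_sqrt hp.le
  linear_combination (Real.sin (ψ s) * deriv (deriv ψ) s - 2 * deriv ψ s * Real.cos (ψ s) * Real.sqrt (deriv ψ s) ^ 2) * hX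

theorem phase_pair_solutions_imply_kummer (σ₁ σ₂ : ℝ) (hσ : σ₁ < σ₂) (q ψ : ℝ → ℝ)
    (hdiff : ∀ t ∈ Ioo σ₁ σ₂, DifferentiableAt ℝ ψ t ∧
      DifferentiableAt ℝ (deriv ψ) t ∧ DifferentiableAt ℝ (deriv (deriv ψ)) t)
    (hpos : ∀ t ∈ Ioo σ₁ σ₂, 0 < deriv ψ t)
    (hu : ∀ t ∈ Ioo σ₁ σ₂,
      deriv (deriv (fun s => Real.cos (ψ s) / Real.sqrt (deriv ψ s))) t
        + q t * (Real.cos (ψ t) / Real.sqrt (deriv ψ t)) = 0)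
    (hv : ∀ t ∈ Ioo σ₁ σ₂,
      deriv (deriv (fun s => Real.sin (ψ s) / Real.sqrt (deriv ψ s))) t
        + q t * (Real.sin (ψ t) / Real.sqrt (deriv ψ t)) = 0) :
    ∀ t ∈ Ioo σ₁ σ₂,
      q t - (deriv ψ t) ^ 2 - (1 / 2) * (deriv (deriv (deriv ψ)) t / deriv ψ t)
        + (3 / 4) * (deriv (deriv ψ) t / deriv ψ t) ^ 2 = 0 := by
  intro t ht
  obtain ⟨hψt, hpt, hp2t⟩ := hdiff t ht
  have hpp := hpos t ht
  have hS : 0 < Real.sqrt (deriv ψ t) := Real.sqrt_pos.2 hpp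
  have hmem : Ioo σ₁ σ₂ ∈ nhds t := (isOpen_Ioo).mem_nhds ht
  -- eventual equalities for the first derivatives
  have hequ : deriv (fun s => Real.cos (ψ s) / Real.sqrt (deriv ψ s)) =ᶠ[nhds t]
      fun s => -Real.sin (ψ s) * Real.sqrt (deriv ψ s)
        - Real.cos (ψ s) * deriv (deriv ψ) s / (2 * deriv ψ s * Real.sqrt (deriv ψ s)) := by
    filter_upwards [hmem] with s hs
    exact deriv_cos_div_sqrt ψ s (hdiff s hs).1 (hdiff s hs).2.1 (hpos s hs)
  have heqv : deriv (fun s => Real.sin (ψ s) / Real.sqrt (deriv ψ s)) =ᶠ[nhds t]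
      fun s => Real.cos (ψ s) * Real.sqrt (deriv ψ s)
        - Real.sin (ψ s) * deriv (deriv ψ) s / (2 * deriv ψ s * Real.sqrt (deriv ψ s)) := by
    filter_upwards [hmem] with s hs
    exact deriv_sin_div_sqrt ψ s (hdiff s hs).1 (hdiff s hs).2.1 (hpos s hs)
  -- HasDerivAt pieces at t
  have hψ : HasDerivAt ψ (deriv ψ t) t := hψt.hasDerivAt
  have hpd : HasDerivAt (deriv ψ) (deriv (deriv ψ) t) t := hpt.hasDerivAt
  have hp2d : HasDerivAt (deriv (deriv ψ)) (deriv (deriv (deriv ψ)) t) t := hp2t.hasDerivAt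
  have hSd : HasDerivAt (fun r => Real.sqrt (deriv ψ r))
      (deriv (deriv ψ) t / (2 * Real.sqrt (deriv ψ t))) t := hpd.sqrt (ne_of_gt hpp)
  have hden : HasDerivAt (fun r => 2 * deriv ψ r * Real.sqrt (deriv ψ r))
      ((2 * deriv (deriv ψ) t) * Real.sqrt (deriv ψ t)
        + (2 * deriv ψ t) * (deriv (deriv ψ) t / (2 * Real.sqrt (deriv ψ t)))) t :=
    (hpd.const_mul 2).mul hSd
  have hdenne : 2 * deriv ψ t * Real.sqrt (deriv ψ t) ≠ 0 := by positivity
  have hg1 := (show HasDerivAt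
    (fun s => (fun r => -Real.sin (ψ r) * Real.sqrt (deriv ψ r)) s
          - (fun r => Real.cos (ψ r) * deriv (deriv ψ) r) s
            / (fun r => 2 * deriv ψ r * Real.sqrt (deriv ψ r)) s) _ t
    from (hψ.sin.neg.mul hSd).sub ((hψ.cos.mul hp2d).div hden hdenne)).deriv
  have hg2 := (show HasDerivAt
    (fun s => (fun r => Real.cos (ψ r) * Real.sqrt (deriv ψ r)) s
          - (fun r => Real.sin (ψ r) * deriv (deriv ψ) r) s
            / (fun r => 2 * deriv ψ r * Real.sqrt (deriv ψ r)) s) _ t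
    from (hψ.cos.mul hSd).sub ((hψ.sin.mul hp2d).div hden hdenne)).deriv
  have E1 := hu t ht
  have E2 := hv t ht
  rw [hequ.deriv_eq] at E1
  rw [heqv.deriv_eq] at E2
  rw [show (fun s => -Real.sin (ψ s) * Real.sqrt (deriv ψ s)
        - Real.cos (ψ s) * deriv (deriv ψ) s / (2 * deriv ψ s * Real.sqrt (deriv ψ s)))
      = fun s => (fun r => -Real.sin (ψ r) * Real.sqrt (deriv ψ r)) s
        - (fun r => Real.cos (ψ r) * deriv (deriv ψ) r) s
          / (fun r => 2 * deriv ψ r * Real.sqrt (deriv ψ r)) s from rfl] at E1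
  rw [hg1] at E1
  rw [show (fun s => Real.cos (ψ s) * Real.sqrt (deriv ψ s)
        - Real.sin (ψ s) * deriv (deriv ψ) s / (2 * deriv ψ s * Real.sqrt (deriv ψ s)))
      = fun s => (fun r => Real.cos (ψ r) * Real.sqrt (deriv ψ r)) s
        - (fun r => Real.sin (ψ r) * deriv (deriv ψ) r) s
          / (fun r => 2 * deriv ψ r * Real.sqrt (deriv ψ r)) s from rfl] at E2
  rw [hg2] at E2
  simp only [Pi.neg_apply, Pi.mul_apply] at E1 E2
  -- now pure algebra
  set c := Real.cos (ψ t)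
  set sn := Real.sin (ψ t)
  set p := deriv ψ t
  set p1 := deriv (deriv ψ) t
  set p2 := deriv (deriv (deriv ψ)) t
  set S := Real.sqrt p
  have hsq : S * S = p := Real.mul_self_sqrt hpp.le
  have htrig : sn ^ 2 + c ^ 2 = 1 := Real.sin_sq_add_cos_sq (ψ t)
  have key : -p*S - (2*p*S*p2 - p1*(2*p1*S + 2*p*(p1/(2*S))))/(2*p*S)^2 + q t/S = 0 := by
    linear_combination c*E1 + sn*E2 -
      (-p*S - (2*p*S*p2 - p1*(2*p1*S + 2*p*(p1/(2*S))))/(2*p*S)^2 + q t/S) * htrig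
  have hSne : S ≠ 0 := ne_of_gt hS
  have hpne : p ≠ 0 := ne_of_gt hpp
  rw [← hsq] at key
  field_simp at key
  rw [← hsq]
  have hS4 : S * S * (S * S) ≠ 0 := by positivity
  field_simp
  have h2 : S * (((q t - (S*S)^2) * (2*(S*S)) - p2) * (4*(S*S)^2) + 3*p1^2*(2*(S*S))) = S * 0 := by
    linear_combination 2 * S ^ 3 * key
  linear_combination 2 * key
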